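/- For any positive integer n, any Y ∈ V^n_d, and any k ≥ 2, the labelled partition space C^n_{Y,k} is Σ_k-equivariantly homeomorphic to the (n+1)-fold topological join EG^n = [k] * [k] * ... * [k] of a k-point discrete set, where Σ_k acts on C^n_{Y,k} by permuting the labels and on EG^n by acting on each join factor. -/

import Mathlib

open unitInterval

inductive JoinRel (X Y : Type*) : X × Y × I → X × Y × I → Prop
  | zero (x : X) (y y' : Y) : JoinRel X Y (x, y, 0) (x, y', 0)
  | one (x x' : X) (y : Y) : JoinRel X Y (x, y, 1) (x', y, 1)

/-- The topological join of two spaces. -/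
def TopJoin (X Y : Type*) : Type _ :=
  Quot (JoinRel X Y)

instance (X Y : Type*) [TopologicalSpace X] [TopologicalSpace Y] :
    TopologicalSpace (TopJoin X Y) :=
  inferInstanceAs (TopologicalSpace (Quot (JoinRel X Y)))

/-- Functoriality of the topological join. -/
def TopJoin.map {X Y X' Y' : Type*} (f : X → X') (g : Y → Y') :
    TopJoin X Y → TopJoin X' Y' :=
  Quot.map (fun p => (f p.1, g p.2.1, p.2.2)) (by
    rintro a b h
    cases h with
    | zero x y y' => exact JoinRel.zero (f x) (g y) (g y')
    | one x x' y => exact JoinRel.one (f x) (f x') (g y))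

/-- `nJoin X n` is the `(n+1)`-fold topological join `X * X * ⋯ * X`. -/
def nJoin (X : Type*) : ℕ → Type _
  | 0 => X
  | n + 1 => TopJoin X (nJoin X n)

instance nJoin.instTopologicalSpace (X : Type*) [TopologicalSpace X] :
    (n : ℕ) → TopologicalSpace (nJoin X n)
  | 0 => inferInstanceAs (TopologicalSpace X)
  | n + 1 =>
    letI := nJoin.instTopologicalSpace X n
    inferInstanceAs (TopologicalSpace (TopJoin X (nJoin X n)))

/-- The induced self-map of the iterated join coming from a self-map of `X`. -/
def nJoinMap {X : Type*} (f : X → X) : (n : ℕ) → nJoin X n → nJoin X n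
  | 0 => f
  | n + 1 => TopJoin.map f (nJoinMap f n)

/-- A scheme of `n` nested hyperplane cuts of `ℝ^d` with prescribed directions. -/
inductive CutTree (d : ℕ) : ℕ → Type
  | leaf : CutTree d 0
  | node {j l : ℕ} (v : EuclideanSpace ℝ (Fin d)) (hv : v ≠ 0)
      (Y₁ : CutTree d j) (Y₂ : CutTree d l) : CutTree d (j + l + 1)

/-- The parameters describing a labelled nested partition in `C^n_{Y,k}`: a label in
`[k]` for the single piece of the trivial partition, and, for a cut scheme
`Y = (v, Y₁, Y₂)`, the offset of the cutting hyperplane (an `EReal`, the values `±∞`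
meaning the hyperplane is at infinity) together with parameters for the two sides. -/
def CutParam (k : ℕ) {d : ℕ} : {n : ℕ} → CutTree d n → Type
  | _, .leaf => Fin k
  | _, .node _ _ Y₁ Y₂ => EReal × CutParam k Y₁ × CutParam k Y₂

noncomputable instance CutParam.instTopologicalSpace (k : ℕ) {d : ℕ} :
    {n : ℕ} → (Y : CutTree d n) → TopologicalSpace (CutParam k Y)
  | _, .leaf => inferInstanceAs (TopologicalSpace (Fin k))
  | _, .node _ _ Y₁ Y₂ =>
    letI := CutParam.instTopologicalSpace k Y₁
    letI := CutParam.instTopologicalSpace k Y₂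
    inferInstanceAs (TopologicalSpace (EReal × CutParam k Y₁ × CutParam k Y₂))

/-- The identifications defining `C^n_{Y,k}`: when the hyperplane is at `+∞` the data of
the upper side is forgotten, and when it is at `-∞` the data of the lower side is
forgotten. -/
def cutParamRel (k : ℕ) {d : ℕ} :
    {n : ℕ} → (Y : CutTree d n) → CutParam k Y → CutParam k Y → Prop
  | _, .leaf => Eq
  | _, .node _ _ Y₁ Y₂ => fun p q =>
      p.1 = q.1 ∧ (p.1 = ⊤ ∨ cutParamRel k Y₁ p.2.1 q.2.1) ∧
        (p.1 = ⊥ ∨ cutParamRel k Y₂ p.2.2 q.2.2)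

/-- The space `C^n_{Y,k}` of labelled nested partitions. -/
def LabelledPartitionSpace (k : ℕ) {d n : ℕ} (Y : CutTree d n) : Type :=
  Quot (cutParamRel k Y)

noncomputable instance (k : ℕ) {d n : ℕ} (Y : CutTree d n) :
    TopologicalSpace (LabelledPartitionSpace k Y) :=
  inferInstanceAs (TopologicalSpace (Quot (cutParamRel k Y)))

/-- The action of a permutation `sg ∈ Σ_k` on the parameters, permuting all labels. -/
def cutRelabel (k : ℕ) {d : ℕ} (sg : Equiv.Perm (Fin k)) :
    {n : ℕ} → (Y : CutTree d n) → CutParam k Y → CutParam k Y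
  | _, .leaf => fun a => sg a
  | _, .node _ _ Y₁ Y₂ => fun p =>
      (p.1, cutRelabel k sg Y₁ p.2.1, cutRelabel k sg Y₂ p.2.2)



noncomputable section EMap

private def sq01 : ℝ → ℝ := fun r => r / (1 + |r|)

private lemma one_add_abs_pos (r : ℝ) : 0 < 1 + |r| := by positivity

private lemma sq01_strictMono : StrictMono sq01 := by
  intro a b hab
  unfold sq01
  rw [div_lt_div_iff₀ (one_add_abs_pos a) (one_add_abs_pos b)]
  rcases abs_cases a with ⟨ha1, ha2⟩ | ⟨ha1, ha2⟩ <;>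
    rcases abs_cases b with ⟨hb1, hb2⟩ | ⟨hb1, hb2⟩ <;>
      rw [ha1, hb1] <;> nlinarith

private lemma abs_sq01_lt_one (r : ℝ) : |sq01 r| < 1 := by
  unfold sq01
  rw [abs_div, abs_of_pos (one_add_abs_pos r), div_lt_one (one_add_abs_pos r)]
  linarith

private lemma sq01_surj {s : ℝ} (hs : |s| < 1) : ∃ r, sq01 r = s := by
  refine ⟨s / (1 - |s|), ?_⟩
  have hu : (0:ℝ) < 1 - |s| := by linarith
  unfold sq01
  rw [abs_div, abs_of_pos hu]
  rw [show 1 + |s| / (1 - |s|) = 1 / (1 - |s|) by field_simp; ring]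
  field_simp

private def erealPre : EReal → ℝ := fun x =>
  if x = ⊥ then -1 else if x = ⊤ then 1 else sq01 x.toReal

private lemma erealPre_bot : erealPre ⊥ = -1 := by simp [erealPre]

private lemma erealPre_top : erealPre ⊤ = 1 := by
  simp [erealPre]

private lemma erealPre_coe (r : ℝ) : erealPre (r : EReal) = sq01 r := by
  simp [erealPre, EReal.coe_ne_bot, EReal.coe_ne_top]

private lemma erealPre_strictMono : StrictMono erealPre := by
  intro x y hxy
  induction x using EReal.rec <;> induction y using EReal.rec
  · exact absurd hxy (lt_irrefl _)
  · rw [erealPre_bot, erealPre_coe]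
    have := abs_sq01_lt_one ‹ℝ›
    rw [abs_lt] at this; linarith
  · rw [erealPre_bot, erealPre_top]; norm_num
  · exact absurd hxy (by simp)
  · rw [erealPre_coe, erealPre_coe]
    exact sq01_strictMono (by exact_mod_cast hxy)
  · rw [erealPre_coe, erealPre_top]
    have := abs_sq01_lt_one ‹ℝ›
    rw [abs_lt] at this; linarith
  · exact absurd hxy (by simp)
  · exact absurd hxy (by simp)
  · exact absurd hxy (lt_irrefl _)

private lemma erealPre_mem (x : EReal) : erealPre x ∈ Set.Icc (-1:ℝ) 1 := by
  induction x using EReal.rec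
  · rw [erealPre_bot]; constructor <;> norm_num
  · rw [erealPre_coe]
    have := abs_lt.1 (abs_sq01_lt_one ‹ℝ›)
    constructor <;> linarith
  · rw [erealPre_top]; constructor <;> norm_num

private def erealIcc : EReal → Set.Icc (-1:ℝ) 1 := fun x => ⟨erealPre x, erealPre_mem x⟩

private lemma erealIcc_surj : Function.Surjective erealIcc := by
  rintro ⟨s, hs1, hs2⟩
  rcases eq_or_lt_of_le hs1 with h | h
  · exact ⟨⊥, by simp [erealIcc, erealPre_bot, ← h]⟩
  rcases eq_or_lt_of_le hs2 with h2 | h2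
  · exact ⟨⊤, by simp [erealIcc, erealPre_top, h2]⟩
  obtain ⟨r, hr⟩ := sq01_surj (abs_lt.2 ⟨h, h2⟩)
  exact ⟨(r : EReal), by simp [erealIcc, erealPre_coe, hr]⟩

private def erealOrderIso : EReal ≃o Set.Icc (-1:ℝ) 1 :=
  StrictMono.orderIsoOfSurjective erealIcc
    (fun _ _ h => by simpa [erealIcc, Subtype.mk_lt_mk] using erealPre_strictMono h)
    erealIcc_surj

def erealMap : EReal → ℝ := fun x => (erealPre x + 1) / 2

lemma continuous_erealMap : Continuous erealMap := by
  have h1 : Continuous erealIcc := by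
    have := erealOrderIso.toHomeomorph.continuous
    exact this
  have h2 : Continuous (erealPre) := continuous_subtype_val.comp h1
  unfold erealMap
  fun_prop

lemma erealMap_injective : Function.Injective erealMap := by
  intro x y h
  have : erealPre x = erealPre y := by unfold erealMap at h; linarith
  exact erealPre_strictMono.injective this

lemma erealMap_bot : erealMap ⊥ = 0 := by simp [erealMap, erealPre_bot]

lemma erealMap_top : erealMap ⊤ = 1 := by norm_num [erealMap, erealPre_top]

lemma erealMap_nonneg (x : EReal) : 0 ≤ erealMap x := by
  have := (erealPre_mem x).1; unfold erealMap; linarith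

lemma erealMap_le_one (x : EReal) : erealMap x ≤ 1 := by
  have := (erealPre_mem x).2; unfold erealMap; linarith

lemma erealMap_eq_one_iff (x : EReal) : erealMap x = 1 ↔ x = ⊤ :=
  ⟨fun h => erealMap_injective (h.trans erealMap_top.symm), fun h => h ▸ erealMap_top⟩

lemma erealMap_eq_zero_iff (x : EReal) : erealMap x = 0 ↔ x = ⊥ :=
  ⟨fun h => erealMap_injective (h.trans erealMap_bot.symm), fun h => h ▸ erealMap_bot⟩

lemma erealMap_surj {s : ℝ} (h0 : 0 ≤ s) (h1 : s ≤ 1) : ∃ x, erealMap x = s := by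
  obtain ⟨x, hx⟩ := erealIcc_surj ⟨2 * s - 1, by constructor <;> linarith⟩
  refine ⟨x, ?_⟩
  have : erealPre x = 2 * s - 1 := congrArg Subtype.val hx
  unfold erealMap; rw [this]; ring

end EMap
section Model

variable {k : ℕ}

/-- Standard basis vector. -/
def bvec (k : ℕ) (x : Fin k) : Fin k → ℝ := fun b => if b = x then 1 else 0

lemma bvec_nonneg (x b : Fin k) : 0 ≤ bvec k x b := by
  unfold bvec; split <;> norm_num

lemma bvec_sum (x : Fin k) : ∑ b, bvec k x b = 1 := by
  simp [bvec]

lemma bvec_injective {x y : Fin k} (h : bvec k x = bvec k y) : x = y := by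
  have := congrFun h x
  simp only [bvec, if_pos rfl] at this
  by_contra hxy
  rw [if_neg (fun hh : x = y => hxy hh)] at this
  norm_num at this

lemma bvec_perm (sg : Equiv.Perm (Fin k)) (x : Fin k) (a : Fin k) :
    bvec k (sg x) a = bvec k x (sg.symm a) := by
  unfold bvec
  congr 1
  exact propext ⟨fun h => by subst h; simp, fun h => by subst h; simp⟩

/-- The model predicate: nonnegative entries summing to `1`, each row supported on at
most one label. -/
def IsModel {k m : ℕ} (w : Fin m → Fin k → ℝ) : Prop :=
  (∀ i a, 0 ≤ w i a) ∧ (∑ i, ∑ a, w i a) = 1 ∧ ∀ i, ∃ x, ∀ b, b ≠ x → w i b = 0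

lemma isModel_const_bvec (x : Fin k) : IsModel (fun _ : Fin 1 => bvec k x) :=
  ⟨fun _ => bvec_nonneg x, by simp [bvec_sum], fun _ => ⟨x, fun b hb => by simp [bvec, hb]⟩⟩

lemma isModel_fin_one {u : Fin 1 → Fin k → ℝ} (h : IsModel u) :
    ∃ x, u = fun _ => bvec k x := by
  obtain ⟨hn, hs, hr⟩ := h
  obtain ⟨x, hx⟩ := hr 0
  refine ⟨x, ?_⟩
  funext i a
  have hi : i = 0 := Subsingleton.elim _ _
  subst hi
  rcases eq_or_ne a x with rfl | ha
  · have : ∑ b, u 0 b = 1 := by simpa using hs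
    rw [Finset.sum_eq_single a (fun b _ hb => hx b hb) (by simp)] at this
    simp [bvec, this]
  · simp [bvec, ha, hx a ha]

lemma isModel_comp_cast {m m' : ℕ} (h : m = m') (w : Fin m' → Fin k → ℝ) :
    IsModel (fun i => w (Fin.cast h i)) ↔ IsModel w := by
  subst h; exact Iff.rfl

/-- The basic block construction for the model of a join. -/
def pnode (m n : ℕ) (s : ℝ) (u : Fin m → Fin k → ℝ) (v : Fin n → Fin k → ℝ) :
    Fin (m + n) → Fin k → ℝ :=
  Fin.append (fun i a => (1 - s) * u i a) (fun i a => s * v i a)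

lemma pnode_left {m n : ℕ} (s : ℝ) (u : Fin m → Fin k → ℝ) (v : Fin n → Fin k → ℝ)
    (i : Fin m) : pnode m n s u v (Fin.castAdd n i) = fun a => (1 - s) * u i a := by
  simp [pnode, Fin.append_left]

lemma pnode_right {m n : ℕ} (s : ℝ) (u : Fin m → Fin k → ℝ) (v : Fin n → Fin k → ℝ)
    (i : Fin n) : pnode m n s u v (Fin.natAdd m i) = fun a => s * v i a := by
  simp [pnode, Fin.append_right]

lemma pnode_sum {m n : ℕ} (s : ℝ) (u : Fin m → Fin k → ℝ) (v : Fin n → Fin k → ℝ) :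
    ∑ i, ∑ a, pnode m n s u v i a
      = (1 - s) * (∑ i, ∑ a, u i a) + s * (∑ i, ∑ a, v i a) := by
  rw [Fin.sum_univ_add (f := fun i => ∑ a, pnode m n s u v i a)]
  simp [pnode_left, pnode_right, Finset.mul_sum]

lemma pnode_blocksum {m n : ℕ} (s : ℝ) (u : Fin m → Fin k → ℝ) (v : Fin n → Fin k → ℝ)
    (hv : ∑ i, ∑ a, v i a = 1) :
    ∑ i, ∑ a, pnode m n s u v (Fin.natAdd m i) a = s := by
  simp [pnode_right, ← Finset.mul_sum, hv]

lemma pnode_isModel {m n : ℕ} {s : ℝ} (h0 : 0 ≤ s) (h1 : s ≤ 1)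
    {u : Fin m → Fin k → ℝ} {v : Fin n → Fin k → ℝ}
    (hu : IsModel u) (hv : IsModel v) : IsModel (pnode m n s u v) := by
  refine ⟨fun i a => ?_, ?_, fun i => ?_⟩
  · induction i using Fin.addCases with
    | left i => rw [pnode_left]; exact mul_nonneg (by linarith) (hu.1 i a)
    | right i => rw [pnode_right]; exact mul_nonneg h0 (hv.1 i a)
  · rw [pnode_sum, hu.2.1, hv.2.1]; ring
  · induction i using Fin.addCases with
    | left i =>
      obtain ⟨x, hx⟩ := hu.2.2 i
      exact ⟨x, fun b hb => by rw [pnode_left]; simp [hx b hb]⟩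
    | right i =>
      obtain ⟨x, hx⟩ := hv.2.2 i
      exact ⟨x, fun b hb => by rw [pnode_right]; simp [hx b hb]⟩

lemma pnode_s0 {m n : ℕ} (u : Fin m → Fin k → ℝ) (v v' : Fin n → Fin k → ℝ) :
    pnode m n 0 u v = pnode m n 0 u v' := by
  funext i a
  induction i using Fin.addCases with
  | left i => rw [pnode_left, pnode_left]
  | right i => rw [pnode_right, pnode_right]; simp

lemma pnode_s1 {m n : ℕ} (u u' : Fin m → Fin k → ℝ) (v : Fin n → Fin k → ℝ) :
    pnode m n 1 u v = pnode m n 1 u' v := by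
  funext i a
  induction i using Fin.addCases with
  | left i => rw [pnode_left, pnode_left]; simp
  | right i => rw [pnode_right, pnode_right]

lemma pnode_inj {m n : ℕ} {s s' : ℝ} {u u' : Fin m → Fin k → ℝ}
    {v v' : Fin n → Fin k → ℝ} (hv : ∑ i, ∑ a, v i a = 1) (hv' : ∑ i, ∑ a, v' i a = 1)
    (h : pnode m n s u v = pnode m n s' u' v') :
    s = s' ∧ (s = 1 ∨ u = u') ∧ (s = 0 ∨ v = v') := by
  have hs : s = s' := by
    have := congrArg (fun q => ∑ i : Fin n, ∑ a, q (Fin.natAdd m i) a) h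
    simpa [pnode_blocksum _ _ _ hv, pnode_blocksum _ _ _ hv'] using this
  subst hs
  refine ⟨rfl, ?_, ?_⟩
  · rcases eq_or_ne s 1 with h1 | h1
    · exact Or.inl h1
    · refine Or.inr (funext fun i => funext fun a => ?_)
      have := congrFun (congrFun h (Fin.castAdd n i)) a
      rw [pnode_left, pnode_left] at this
      exact mul_left_cancel₀ (by intro hh; apply h1; linarith) this
  · rcases eq_or_ne s 0 with h0 | h0
    · exact Or.inl h0
    · refine Or.inr (funext fun i => funext fun a => ?_)
      have := congrFun (congrFun h (Fin.natAdd m i)) a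
      rw [pnode_right, pnode_right] at this
      exact mul_left_cancel₀ h0 this

lemma pnode_perm {m n : ℕ} (sg : Equiv.Perm (Fin k)) (s : ℝ)
    (u : Fin m → Fin k → ℝ) (v : Fin n → Fin k → ℝ) (i : Fin (m + n)) (a : Fin k) :
    pnode m n s (fun i a => u i (sg.symm a)) (fun i a => v i (sg.symm a)) i a
      = pnode m n s u v i (sg.symm a) := by
  induction i using Fin.addCases with
  | left i => rw [pnode_left, pnode_left]
  | right i => rw [pnode_right, pnode_right]

lemma pnode_surj {m n : ℕ} (w : Fin (m + n) → Fin k → ℝ) (hw : IsModel w)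
    (u₀ : Fin m → Fin k → ℝ) (hu₀ : IsModel u₀)
    (v₀ : Fin n → Fin k → ℝ) (hv₀ : IsModel v₀) :
    ∃ (s : ℝ) (u : Fin m → Fin k → ℝ) (v : Fin n → Fin k → ℝ),
      0 ≤ s ∧ s ≤ 1 ∧ IsModel u ∧ IsModel v ∧ pnode m n s u v = w := by
  obtain ⟨hwn, hws, hwr⟩ := hw
  set s : ℝ := ∑ i : Fin n, ∑ a, w (Fin.natAdd m i) a with hs_def
  set s₁ : ℝ := ∑ i : Fin m, ∑ a, w (Fin.castAdd n i) a with hs1_def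
  have htotal : s₁ + s = 1 := by
    rw [hs1_def, hs_def, ← Fin.sum_univ_add (f := fun i => ∑ a, w i a)]
    exact hws
  have hs0 : 0 ≤ s := Finset.sum_nonneg fun i _ =>
    Finset.sum_nonneg fun a _ => hwn _ a
  have hs10 : 0 ≤ s₁ := Finset.sum_nonneg fun i _ =>
    Finset.sum_nonneg fun a _ => hwn _ a
  have hs1 : s ≤ 1 := by linarith
  have hs1' : s₁ = 1 - s := by linarith
  classical
  refine ⟨s, if h1 : s = 1 then u₀ else fun i a => w (Fin.castAdd n i) a / (1 - s),
    if h0 : s = 0 then v₀ else fun i a => w (Fin.natAdd m i) a / s,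
    hs0, hs1, ?_, ?_, ?_⟩
  · split
    · exact hu₀
    · rename_i h1
      have hpos : 0 < 1 - s := by
        rcases lt_or_eq_of_le hs1 with h | h
        · linarith
        · exact absurd h h1
      refine ⟨fun i a => div_nonneg (hwn _ a) hpos.le, ?_, fun i => ?_⟩
      · simp only [← Finset.sum_div]
        rw [← hs1_def, hs1']
        field_simp
      · obtain ⟨x, hx⟩ := hwr (Fin.castAdd n i)
        exact ⟨x, fun b hb => by simp [hx b hb]⟩
  · split
    · exact hv₀
    · rename_i h0
      have hpos : 0 < s := lt_of_le_of_ne hs0 (Ne.symm h0)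
      refine ⟨fun i a => div_nonneg (hwn _ a) hpos.le, ?_, fun i => ?_⟩
      · simp only [← Finset.sum_div]
        rw [← hs_def]
        field_simp
      · obtain ⟨x, hx⟩ := hwr (Fin.natAdd m i)
        exact ⟨x, fun b hb => by simp [hx b hb]⟩
  · funext i a
    induction i using Fin.addCases with
    | left i =>
      rw [pnode_left]
      split
      · rename_i h1
        have hz : ∀ i' : Fin m, ∀ a', w (Fin.castAdd n i') a' = 0 := by
          have hset : ∑ i' : Fin m, ∑ a', w (Fin.castAdd n i') a' = 0 := by
            rw [← hs1_def, hs1', h1]; ring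
          intro i' a'
          have houter := (Finset.sum_eq_zero_iff_of_nonneg
            (fun i'' _ => Finset.sum_nonneg fun a'' _ => hwn _ a'')).1 hset i' (by simp)
          exact (Finset.sum_eq_zero_iff_of_nonneg (fun a'' _ => hwn _ a'')).1 houter a' (by simp)
        rw [h1, hz i a]; ring
      · rename_i h1
        have : (1 : ℝ) - s ≠ 0 := by
          intro hh; apply h1; linarith
        field_simp
    | right i =>
      rw [pnode_right]
      split
      · rename_i h0
        have hz : ∀ i' : Fin n, ∀ a', w (Fin.natAdd m i') a' = 0 := by
          have hset : ∑ i' : Fin n, ∑ a', w (Fin.natAdd m i') a' = 0 := by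
            rw [← hs_def, h0]
          intro i' a'
          have houter := (Finset.sum_eq_zero_iff_of_nonneg
            (fun i'' _ => Finset.sum_nonneg fun a'' _ => hwn _ a'')).1 hset i' (by simp)
          exact (Finset.sum_eq_zero_iff_of_nonneg (fun a'' _ => hwn _ a'')).1 houter a' (by simp)
        rw [h0, hz i a]; ring
      · rename_i h0
        field_simp

end Model
section JModel

lemma compactSpace_quot {α : Type*} [TopologicalSpace α] [CompactSpace α]
    (r : α → α → Prop) : CompactSpace (Quot r) := by
  constructor
  have h : IsCompact (Set.range (Quot.mk r)) := isCompact_range continuous_quot_mk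
  rwa [Set.range_eq_univ.mpr Quot.mk_surjective] at h

variable {k : ℕ}

theorem jadd (n : ℕ) : n + 1 + 1 = 1 + (n + 1) := by omega

private def jstep (k n : ℕ) (g : nJoin (Fin k) n → Fin (n + 1) → Fin k → ℝ) :
    Fin k × nJoin (Fin k) n × I → Fin (n + 1 + 1) → Fin k → ℝ :=
  fun p i => pnode 1 (n + 1) (p.2.2 : ℝ) (fun _ => bvec k p.1) (g p.2.1)
    (Fin.cast (jadd n) i)

private lemma jstep_rel (k n : ℕ) (g : nJoin (Fin k) n → Fin (n + 1) → Fin k → ℝ) :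
    ∀ a b, JoinRel (Fin k) (nJoin (Fin k) n) a b → jstep k n g a = jstep k n g b := by
  rintro a b h
  cases h with
  | zero x y y' =>
    funext i a
    show pnode 1 (n+1) ((0:I) : ℝ) (fun _ => bvec k x) (g y) (Fin.cast (jadd n) i) a
      = pnode 1 (n+1) ((0:I) : ℝ) (fun _ => bvec k x) (g y') (Fin.cast (jadd n) i) a
    rw [show ((0:I) : ℝ) = 0 from rfl, pnode_s0 (fun _ => bvec k x) (g y) (g y')]
  | one x x' y =>
    funext i a
    show pnode 1 (n+1) ((1:I) : ℝ) (fun _ => bvec k x) (g y) (Fin.cast (jadd n) i) a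
      = pnode 1 (n+1) ((1:I) : ℝ) (fun _ => bvec k x') (g y) (Fin.cast (jadd n) i) a
    rw [show ((1:I) : ℝ) = 1 from rfl, pnode_s1 (fun _ => bvec k x) (fun _ => bvec k x') (g y)]

noncomputable def jmodel (k : ℕ) : (n : ℕ) → nJoin (Fin k) n → Fin (n + 1) → Fin k → ℝ
  | 0 => fun x _ => bvec k x
  | n + 1 => Quot.lift (jstep k n (jmodel k n)) (jstep_rel k n (jmodel k n))

lemma jmodel_succ (k n : ℕ) :
    jmodel k (n + 1) = Quot.lift (jstep k n (jmodel k n)) (jstep_rel k n (jmodel k n)) := rfl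

lemma jmodel_mk (k n : ℕ) (p : Fin k × nJoin (Fin k) n × I) :
    jmodel k (n + 1) (Quot.mk (JoinRel (Fin k) (nJoin (Fin k) n)) p)
      = fun i => pnode 1 (n + 1) (p.2.2 : ℝ) (fun _ => bvec k p.1) (jmodel k n p.2.1)
          (Fin.cast (jadd n) i) := rfl

lemma njoinmap_mk {k n : ℕ} (f : Fin k → Fin k) (p : Fin k × nJoin (Fin k) n × I) :
    nJoinMap f (n + 1) (Quot.mk (JoinRel (Fin k) (nJoin (Fin k) n)) p)
      = Quot.mk (JoinRel (Fin k) (nJoin (Fin k) n)) (f p.1, nJoinMap f n p.2.1, p.2.2) := rfl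

lemma jmodel_isModel (k : ℕ) : ∀ (n : ℕ) (z : nJoin (Fin k) n), IsModel (jmodel k n z)
  | 0, x => isModel_const_bvec x
  | n + 1, z => by
    refine Quot.ind (β := fun z => IsModel (jmodel k (n+1) z)) (fun p => ?_) z
    obtain ⟨x, y, t⟩ := p
    rw [jmodel_mk]
    exact (isModel_comp_cast (jadd n)
        (pnode 1 (n + 1) (t : ℝ) (fun _ => bvec k x) (jmodel k n y))).mpr
      (pnode_isModel t.2.1 t.2.2 (isModel_const_bvec x) (jmodel_isModel k n y))

lemma comp_cast_inj {m m' : ℕ} (h : m = m') (w w' : Fin m' → Fin k → ℝ)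
    (he : (fun i => w (Fin.cast h i)) = (fun i => w' (Fin.cast h i))) : w = w' := by
  subst h; exact he

lemma njoin_nonempty (k : ℕ) (hk : 0 < k) : ∀ n, Nonempty (nJoin (Fin k) n)
  | 0 => ⟨(⟨0, hk⟩ : Fin k)⟩
  | n + 1 =>
    ⟨Quot.mk (JoinRel (Fin k) (nJoin (Fin k) n)) (⟨0, hk⟩, (njoin_nonempty k hk n).some, 0)⟩

end JModel
section JModel2

lemma jmodel_inj (k : ℕ) : ∀ (n : ℕ) (z z' : nJoin (Fin k) n),
    jmodel k n z = jmodel k n z' → z = z'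
  | 0, x, x', h => bvec_injective (congrFun h 0)
  | n + 1, z, z', h => by
    revert h
    refine Quot.ind (β := fun z => jmodel k (n+1) z = jmodel k (n+1) z' → z = z')
      (fun p => ?_) z
    refine Quot.ind (β := fun z' => ∀ _ : jmodel k (n+1) (Quot.mk _ p) = jmodel k (n+1) z',
      Quot.mk _ p = z') (fun p' h => ?_) z'
    obtain ⟨x, y, t⟩ := p
    obtain ⟨x', y', t'⟩ := p'
    rw [jmodel_mk, jmodel_mk] at h
    have hp : pnode 1 (n+1) (t : ℝ) (fun _ => bvec k x) (jmodel k n y)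
        = pnode 1 (n+1) (t' : ℝ) (fun _ => bvec k x') (jmodel k n y') :=
      comp_cast_inj (jadd n) _ _ h
    obtain ⟨hs, hu, hv⟩ := pnode_inj (jmodel_isModel k n y).2.1 (jmodel_isModel k n y').2.1 hp
    by_cases h1 : (t : ℝ) = 1
    · have ht : t = 1 := Subtype.ext h1
      have ht' : t' = 1 := Subtype.ext (by rw [← hs]; exact h1)
      have hy : y = y' := by
        rcases hv with hv | hv
        · rw [h1] at hv; norm_num at hv
        · exact jmodel_inj k n y y' hv
      rw [ht, ht', hy]
      exact Quot.sound (JoinRel.one x x' y')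
    · by_cases h0 : (t : ℝ) = 0
      · have ht : t = 0 := Subtype.ext h0
        have ht' : t' = 0 := Subtype.ext (by rw [← hs]; exact h0)
        have hx : x = x' := by
          rcases hu with hu | hu
          · exact absurd hu h1
          · exact bvec_injective (congrFun hu 0)
        rw [ht, ht', hx]
        exact Quot.sound (JoinRel.zero x' y y')
      · have hx : x = x' := by
          rcases hu with hu | hu
          · exact absurd hu h1
          · exact bvec_injective (congrFun hu 0)
        have hy : y = y' := by
          rcases hv with hv | hv
          · exact absurd hv h0
          · exact jmodel_inj k n y y' hv
        rw [hx, hy, Subtype.ext hs]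

lemma jmodel_surj (k : ℕ) (hk : 0 < k) : ∀ (n : ℕ) (w : Fin (n + 1) → Fin k → ℝ),
    IsModel w → ∃ z, jmodel k n z = w
  | 0, w, hw => by
    obtain ⟨x, hx⟩ := isModel_fin_one hw
    exact ⟨x, hx.symm⟩
  | n + 1, w, hw => by
    have h2 : 1 + (n + 1) = n + 1 + 1 := by omega
    set w' : Fin (1 + (n + 1)) → Fin k → ℝ := fun i => w (Fin.cast h2 i) with hw'_def
    have hw' : IsModel w' := (isModel_comp_cast h2 w).mpr hw
    obtain ⟨s, u, v, hs0, hs1, hu, hv, heq⟩ := pnode_surj w' hw'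
      (fun _ => bvec k ⟨0, hk⟩) (isModel_const_bvec _)
      (jmodel k n (njoin_nonempty k hk n).some) (jmodel_isModel k n _)
    obtain ⟨x, hxu⟩ := isModel_fin_one hu
    obtain ⟨y, hy⟩ := jmodel_surj k hk n v hv
    refine ⟨Quot.mk (JoinRel (Fin k) (nJoin (Fin k) n)) (x, y, ⟨s, hs0, hs1⟩), ?_⟩
    rw [jmodel_mk]
    funext i a
    show pnode 1 (n+1) s (fun _ => bvec k x) (jmodel k n y) (Fin.cast (jadd n) i) a = w i a
    rw [hy, ← hxu, heq, hw'_def]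
    rfl

lemma jmodel_perm (k : ℕ) (sg : Equiv.Perm (Fin k)) :
    ∀ (n : ℕ) (z : nJoin (Fin k) n) (i : Fin (n + 1)) (a : Fin k),
      jmodel k n (nJoinMap (⇑sg) n z) i a = jmodel k n z i (sg.symm a)
  | 0, x, i, a => bvec_perm sg x a
  | n + 1, z, i, a => by
    refine Quot.ind (β := fun z => ∀ i a,
      jmodel k (n+1) (nJoinMap (⇑sg) (n+1) z) i a = jmodel k (n+1) z i (sg.symm a))
      (fun p i a => ?_) z i a
    obtain ⟨x, y, t⟩ := p
    rw [njoinmap_mk, jmodel_mk, jmodel_mk]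
    show pnode 1 (n+1) (t : ℝ) (fun _ => bvec k (sg x)) (jmodel k n (nJoinMap (⇑sg) n y))
        (Fin.cast (jadd n) i) a
      = pnode 1 (n+1) (t : ℝ) (fun _ => bvec k x) (jmodel k n y)
        (Fin.cast (jadd n) i) (sg.symm a)
    rw [show (fun (_ : Fin 1) => bvec k (sg x)) = fun (_ : Fin 1) a => bvec k x (sg.symm a) by
        funext _ a; exact bvec_perm sg x a,
      show jmodel k n (nJoinMap (⇑sg) n y) = fun i a => jmodel k n y i (sg.symm a) by
        funext i a; exact jmodel_perm k sg n y i a]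
    exact pnode_perm sg (t : ℝ) _ _ _ a

lemma jmodel_cont (k : ℕ) : ∀ n, Continuous (jmodel k n)
  | 0 => continuous_of_discreteTopology (α := Fin k)
  | n + 1 => by
    show Continuous (Quot.lift (jstep k n (jmodel k n)) (jstep_rel k n (jmodel k n)))
    refine continuous_quot_lift _ ?_
    apply continuous_pi
    intro i
    apply continuous_pi
    intro a
    show Continuous fun p : Fin k × nJoin (Fin k) n × I =>
      pnode 1 (n+1) ((p.2.2 : ℝ)) (fun _ => bvec k p.1) (jmodel k n p.2.1)
        (Fin.cast (jadd n) i) a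
    generalize Fin.cast (jadd n) i = i'
    induction i' using Fin.addCases with
    | left i' =>
      simp only [pnode_left]
      exact (continuous_const.sub
        (continuous_subtype_val.comp (continuous_snd.comp continuous_snd))).mul
        ((continuous_of_discreteTopology (f := fun x : Fin k => bvec k x a)).comp
          continuous_fst)
    | right i' =>
      simp only [pnode_right]
      exact (continuous_subtype_val.comp (continuous_snd.comp continuous_snd)).mul
        ((continuous_apply a).comp ((continuous_apply i').comp
          ((jmodel_cont k n).comp (continuous_fst.comp continuous_snd))))

lemma njoin_compactSpace (k : ℕ) : ∀ n, CompactSpace (nJoin (Fin k) n)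
  | 0 => inferInstanceAs (CompactSpace (Fin k))
  | n + 1 => by
    haveI := njoin_compactSpace k n
    exact compactSpace_quot (JoinRel (Fin k) (nJoin (Fin k) n))

end JModel2
section PModel

theorem padd (j l : ℕ) : j + l + 1 + 1 = (j + 1) + (l + 1) := by omega

noncomputable def pmodel (k d : ℕ) :
    {n : ℕ} → (Y : CutTree d n) → CutParam k Y → Fin (n + 1) → Fin k → ℝ
  | _, .leaf, x => fun _ => bvec k x
  | _, @CutTree.node _ j l _ _ Y₁ Y₂, p => fun i =>
      pnode (j + 1) (l + 1) (erealMap p.1) (pmodel k d Y₁ p.2.1) (pmodel k d Y₂ p.2.2)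
        (Fin.cast (padd j l) i)

lemma pmodel_node {k d j l : ℕ} (v : EuclideanSpace ℝ (Fin d)) (hv : v ≠ 0)
    (Y₁ : CutTree d j) (Y₂ : CutTree d l) (p : CutParam k (CutTree.node v hv Y₁ Y₂)) :
    pmodel k d (CutTree.node v hv Y₁ Y₂) p = fun i =>
      pnode (j + 1) (l + 1) (erealMap p.1) (pmodel k d Y₁ p.2.1) (pmodel k d Y₂ p.2.2)
        (Fin.cast (padd j l) i) := rfl

lemma cutParam_nonempty (k d : ℕ) (hk : 0 < k) :
    ∀ {n : ℕ} (Y : CutTree d n), Nonempty (CutParam k Y)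
  | _, .leaf => ⟨(⟨0, hk⟩ : Fin k)⟩
  | _, .node v hv Y₁ Y₂ =>
    ⟨((⊥ : EReal), (cutParam_nonempty k d hk Y₁).some, (cutParam_nonempty k d hk Y₂).some)⟩

lemma pmodel_isModel (k d : ℕ) :
    ∀ {n : ℕ} (Y : CutTree d n) (p : CutParam k Y), IsModel (pmodel k d Y p)
  | _, .leaf, x => isModel_const_bvec x
  | _, @CutTree.node _ j l v hv Y₁ Y₂, p => by
    rw [pmodel_node]
    exact (isModel_comp_cast (padd j l)
        (pnode (j+1) (l+1) (erealMap p.1) (pmodel k d Y₁ p.2.1) (pmodel k d Y₂ p.2.2))).mpr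
      (pnode_isModel (erealMap_nonneg _) (erealMap_le_one _)
        (pmodel_isModel k d Y₁ p.2.1) (pmodel_isModel k d Y₂ p.2.2))

lemma pmodel_sound (k d : ℕ) :
    ∀ {n : ℕ} (Y : CutTree d n) (p q : CutParam k Y),
      cutParamRel k Y p q → pmodel k d Y p = pmodel k d Y q
  | _, .leaf, p, q, h => by
    have hpq : p = q := h
    rw [hpq]
  | _, @CutTree.node _ j l v hv Y₁ Y₂, p, q, h => by
    obtain ⟨h1, h2, h3⟩ := h
    rw [pmodel_node, pmodel_node]
    funext i a
    generalize Fin.cast (padd j l) i = i'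
    induction i' using Fin.addCases with
    | left i' =>
      simp only [pnode_left]
      rw [← h1]
      rcases h2 with h2 | h2
      · rw [h2, erealMap_top]; norm_num
      · rw [pmodel_sound k d Y₁ _ _ h2]
    | right i' =>
      simp only [pnode_right]
      rw [← h1]
      rcases h3 with h3 | h3
      · rw [h3, erealMap_bot]; norm_num
      · rw [pmodel_sound k d Y₂ _ _ h3]

lemma pmodel_inj (k d : ℕ) :
    ∀ {n : ℕ} (Y : CutTree d n) (p q : CutParam k Y),
      pmodel k d Y p = pmodel k d Y q → cutParamRel k Y p q
  | _, .leaf, p, q, h => by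
    have : p = q := bvec_injective (congrFun h 0)
    exact this
  | _, @CutTree.node _ j l v hv Y₁ Y₂, p, q, h => by
    rw [pmodel_node, pmodel_node] at h
    have hp := comp_cast_inj (padd j l) _ _ h
    obtain ⟨hs, hu, hv'⟩ := pnode_inj (pmodel_isModel k d Y₂ p.2.2).2.1
      (pmodel_isModel k d Y₂ q.2.2).2.1 hp
    refine ⟨erealMap_injective hs, ?_, ?_⟩
    · rcases hu with hu | hu
      · exact Or.inl ((erealMap_eq_one_iff p.1).1 hu)
      · exact Or.inr (pmodel_inj k d Y₁ _ _ hu)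
    · rcases hv' with hv' | hv'
      · exact Or.inl ((erealMap_eq_zero_iff p.1).1 hv')
      · exact Or.inr (pmodel_inj k d Y₂ _ _ hv')

lemma pmodel_surj (k d : ℕ) (hk : 0 < k) :
    ∀ {n : ℕ} (Y : CutTree d n) (w : Fin (n + 1) → Fin k → ℝ),
      IsModel w → ∃ p, pmodel k d Y p = w
  | _, .leaf, w, hw => by
    obtain ⟨x, hx⟩ := isModel_fin_one hw
    exact ⟨x, hx.symm⟩
  | _, @CutTree.node _ j l v' hv' Y₁ Y₂, w, hw => by
    have h2 : (j + 1) + (l + 1) = j + l + 1 + 1 := by omega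
    set w' : Fin ((j + 1) + (l + 1)) → Fin k → ℝ := fun i => w (Fin.cast h2 i) with hw'_def
    have hw' : IsModel w' := (isModel_comp_cast h2 w).mpr hw
    obtain ⟨s, u, v, hs0, hs1, hu, hv, heq⟩ := pnode_surj w' hw'
      (pmodel k d Y₁ (cutParam_nonempty k d hk Y₁).some) (pmodel_isModel k d Y₁ _)
      (pmodel k d Y₂ (cutParam_nonempty k d hk Y₂).some) (pmodel_isModel k d Y₂ _)
    obtain ⟨t, ht⟩ := erealMap_surj hs0 hs1
    obtain ⟨p₁, hp₁⟩ := pmodel_surj k d hk Y₁ u hu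
    obtain ⟨p₂, hp₂⟩ := pmodel_surj k d hk Y₂ v hv
    refine ⟨(t, p₁, p₂), ?_⟩
    funext i a
    show pnode (j+1) (l+1) (erealMap t) (pmodel k d Y₁ p₁) (pmodel k d Y₂ p₂)
      (Fin.cast (padd j l) i) a = w i a
    rw [ht, hp₁, hp₂, heq, hw'_def]
    rfl

lemma pmodel_perm (k d : ℕ) (sg : Equiv.Perm (Fin k)) :
    ∀ {n : ℕ} (Y : CutTree d n) (p : CutParam k Y) (i : Fin (n + 1)) (a : Fin k),
      pmodel k d Y (cutRelabel k sg Y p) i a = pmodel k d Y p i (sg.symm a)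
  | _, .leaf, x, i, a => bvec_perm sg x a
  | _, @CutTree.node _ j l v hv Y₁ Y₂, p, i, a => by
    rw [show cutRelabel k sg (CutTree.node v hv Y₁ Y₂) p
        = (p.1, cutRelabel k sg Y₁ p.2.1, cutRelabel k sg Y₂ p.2.2) from rfl,
      pmodel_node]
    show pnode (j+1) (l+1) (erealMap p.1) (pmodel k d Y₁ (cutRelabel k sg Y₁ p.2.1))
        (pmodel k d Y₂ (cutRelabel k sg Y₂ p.2.2)) (Fin.cast (padd j l) i) a
      = pnode (j+1) (l+1) (erealMap p.1) (pmodel k d Y₁ p.2.1) (pmodel k d Y₂ p.2.2)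
        (Fin.cast (padd j l) i) (sg.symm a)
    rw [show pmodel k d Y₁ (cutRelabel k sg Y₁ p.2.1)
          = fun i a => pmodel k d Y₁ p.2.1 i (sg.symm a) by
        funext i a; exact pmodel_perm k d sg Y₁ p.2.1 i a,
      show pmodel k d Y₂ (cutRelabel k sg Y₂ p.2.2)
          = fun i a => pmodel k d Y₂ p.2.2 i (sg.symm a) by
        funext i a; exact pmodel_perm k d sg Y₂ p.2.2 i a]
    exact pnode_perm sg (erealMap p.1) _ _ _ a

lemma pmodel_cont (k d : ℕ) :
    ∀ {n : ℕ} (Y : CutTree d n), Continuous (pmodel k d Y)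
  | _, .leaf => continuous_of_discreteTopology (α := Fin k)
  | _, @CutTree.node _ j l v hv Y₁ Y₂ => by
    apply continuous_pi
    intro i
    apply continuous_pi
    intro a
    simp only [pmodel_node]
    generalize Fin.cast (padd j l) i = i'
    induction i' using Fin.addCases with
    | left i' =>
      simp only [pnode_left]
      exact (continuous_const.sub (continuous_erealMap.comp continuous_fst)).mul
        ((continuous_apply a).comp ((continuous_apply i').comp
          ((pmodel_cont k d Y₁).comp (continuous_fst.comp continuous_snd))))
    | right i' =>
      simp only [pnode_right]
      exact (continuous_erealMap.comp continuous_fst).mul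
        ((continuous_apply a).comp ((continuous_apply i').comp
          ((pmodel_cont k d Y₂).comp (continuous_snd.comp continuous_snd))))

lemma cutParam_compactSpace (k d : ℕ) :
    ∀ {n : ℕ} (Y : CutTree d n), CompactSpace (CutParam k Y)
  | _, .leaf => inferInstanceAs (CompactSpace (Fin k))
  | _, .node _ _ Y₁ Y₂ => by
    haveI := cutParam_compactSpace k d Y₁
    haveI := cutParam_compactSpace k d Y₂
    exact inferInstanceAs (CompactSpace (EReal × _ × _))

end PModel

section Assemble

noncomputable def Fmap (k d n : ℕ) (Y : CutTree d n) :
    LabelledPartitionSpace k Y → {w : Fin (n + 1) → Fin k → ℝ // IsModel w} :=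
  Quot.lift (fun p => ⟨pmodel k d Y p, pmodel_isModel k d Y p⟩)
    (fun p q hpq => Subtype.ext (pmodel_sound k d Y p q hpq))

lemma Fmap_mk (k d n : ℕ) (Y : CutTree d n) (p : CutParam k Y) :
    Fmap k d n Y (Quot.mk (cutParamRel k Y) p) = ⟨pmodel k d Y p, pmodel_isModel k d Y p⟩ :=
  rfl

noncomputable def Gmap (k n : ℕ) :
    nJoin (Fin k) n → {w : Fin (n + 1) → Fin k → ℝ // IsModel w} :=
  fun z => ⟨jmodel k n z, jmodel_isModel k n z⟩

lemma Fmap_bijective (k d n : ℕ) (hk0 : 0 < k) (Y : CutTree d n) :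
    Function.Bijective (Fmap k d n Y) := by
  constructor
  · intro z z'
    refine Quot.ind (β := fun z => ∀ z', Fmap k d n Y z = Fmap k d n Y z' → z = z')
      (fun p z' => ?_) z z'
    refine Quot.ind
      (β := fun z' => Fmap k d n Y (Quot.mk _ p) = Fmap k d n Y z' → Quot.mk _ p = z')
      (fun q hq => ?_) z'
    rw [Fmap_mk, Fmap_mk] at hq
    exact Quot.sound (pmodel_inj k d Y p q (Subtype.ext_iff.1 hq))
  · rintro ⟨w, hw⟩
    obtain ⟨p, hp⟩ := pmodel_surj k d hk0 Y w hw
    exact ⟨Quot.mk _ p, by rw [Fmap_mk]; exact Subtype.ext hp⟩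

lemma Gmap_bijective (k n : ℕ) (hk0 : 0 < k) : Function.Bijective (Gmap k n) := by
  constructor
  · intro z z' h
    exact jmodel_inj k n z z' (Subtype.ext_iff.1 h)
  · rintro ⟨w, hw⟩
    obtain ⟨z, hz⟩ := jmodel_surj k hk0 n w hw
    exact ⟨z, Subtype.ext hz⟩

lemma Fmap_continuous (k d n : ℕ) (Y : CutTree d n) : Continuous (Fmap k d n Y) :=
  continuous_quot_lift _ ((pmodel_cont k d Y).subtype_mk _)

lemma Gmap_continuous (k n : ℕ) : Continuous (Gmap k n) :=
  (jmodel_cont k n).subtype_mk _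

end Assemble


/-- For any scheme `Y ∈ V^n_d` of nested hyperplane cuts and any `k ≥ 2`, the labelled
partition space `C^n_{Y,k}` is `Σ_k`-equivariantly homeomorphic to the `(n+1)`-fold join
`EG^n = [k] * [k] * ⋯ * [k]` of a `k`-point discrete space, where `Σ_k` permutes the
labels on `C^n_{Y,k}` and acts on every join factor of `EG^n`. -/
theorem labelledPartitionSpace_homeo_join (d n k : ℕ) (hn : 0 < n) (hk : 2 ≤ k)
    (Y : CutTree d n) :
    ∃ h : LabelledPartitionSpace k Y ≃ₜ nJoin (Fin k) n,
      ∀ (sg : Equiv.Perm (Fin k)) (p : CutParam k Y),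
        h (Quot.mk _ (cutRelabel k sg Y p)) =
          nJoinMap (sg : Fin k → Fin k) n (h (Quot.mk _ p)) := by
  have hk0 : 0 < k := by omega
  haveI := cutParam_compactSpace k d Y
  haveI : CompactSpace (LabelledPartitionSpace k Y) := compactSpace_quot (cutParamRel k Y)
  haveI := njoin_compactSpace k n
  let hF : LabelledPartitionSpace k Y ≃ₜ {w : Fin (n + 1) → Fin k → ℝ // IsModel w} :=
    Continuous.homeoOfEquivCompactToT2
      (f := Equiv.ofBijective (Fmap k d n Y) (Fmap_bijective k d n hk0 Y))
      (Fmap_continuous k d n Y)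
  let hG : nJoin (Fin k) n ≃ₜ {w : Fin (n + 1) → Fin k → ℝ // IsModel w} :=
    Continuous.homeoOfEquivCompactToT2
      (f := Equiv.ofBijective (Gmap k n) (Gmap_bijective k n hk0))
      (Gmap_continuous k n)
  have hFval : ∀ z, hF z = Fmap k d n Y z := fun _ => rfl
  have hGval : ∀ z, hG z = Gmap k n z := fun _ => rfl
  refine ⟨hF.trans hG.symm, fun sg p => ?_⟩
  apply hG.injective
  have key : ∀ z, hG ((hF.trans hG.symm) z) = hF z := fun z => hG.apply_symm_apply (hF z)
  refine (key _).trans ?_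
  have e2 : (hG ((hF.trans hG.symm) (Quot.mk _ p))).val = pmodel k d Y p := by
    exact congrArg Subtype.val ((key _).trans (hFval _))
  refine (hFval _).trans (Eq.trans ?_ (hGval _).symm)
  apply Subtype.ext
  funext i a
  show pmodel k d Y (cutRelabel k sg Y p) i a
    = jmodel k n (nJoinMap (⇑sg) n ((hF.trans hG.symm) (Quot.mk _ p))) i a
  rw [pmodel_perm, jmodel_perm]
  have e3 : jmodel k n ((hF.trans hG.symm) (Quot.mk (cutParamRel k Y) p)) = pmodel k d Y p := by
    have := e2
    rwa [hGval] at this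
  rw [e3]
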